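/- arXiv:2101.10938 — 2 statements merged into one kernel-verified Lean document; each statement's English description precedes it below -/
import Mathlib

section
/- Let V be a finite-dimensional vector space over ℚ, V_ℂ = V ⊗_ℚ ℂ its complexification, and σ : V_ℂ → V_ℂ the complex conjugation (the ℂ-antilinear involution with σ(v ⊗ z) = v ⊗ z̄). Fix n ∈ ℤ. A finite exhaustive separated decreasing filtration F^• of V_ℂ by ℂ-subspaces satisfies V_ℂ = F^p V_ℂ ⊕ σ(F^{n+1-p} V_ℂ) for every p ∈ ℤ if and only if there exists a direct sum decomposition V_ℂ = ⊕_{p+q=n} V^{p,q} into ℂ-subspaces with σ(V^{q,p}) = V^{p,q} for all p,q with p+q=n and F^p V_ℂ = ⊕_{p'≥p} V^{p',n-p'} for all p; moreover in that case the decomposition is unique and is given by V^{p,q} = F^p V_ℂ ∩ σ(F^q V_ℂ). -/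
/-!
STATEMENT 0: For a finite-dimensional ℚ-vector space `V` with complexification
`V_ℂ = ℂ ⊗[ℚ] V` and complex conjugation `σ`, a finite exhaustive separated
decreasing filtration `F` of `V_ℂ` by ℂ-subspaces satisfies
`V_ℂ = F^p ⊕ σ(F^{n+1-p})` for all `p` iff there is a Hodge decomposition
`V_ℂ = ⊕_{p+q=n} V^{p,q}` (indexed by `p`, with `q = n - p`) with
`σ(V^{q,p}) = V^{p,q}` and `F^p = ⊕_{p'≥p} V^{p',n-p'}`; moreover in that
case the decomposition is unique, given by `V^{p,q} = F^p ∩ σ(F^q)`.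
-/

open TensorProduct

/-- Complex conjugation on the complexification `ℂ ⊗[ℚ] V`, acting as
`z ⊗ v ↦ z̄ ⊗ v`; it is ℚ-linear (indeed ℂ-antilinear) and fixes `V ⊗ 1`. -/
noncomputable def sigma (V : Type) [AddCommGroup V] [Module ℚ V] :
    (ℂ ⊗[ℚ] V) →ₗ[ℚ] (ℂ ⊗[ℚ] V) :=
  TensorProduct.map ((starRingEnd ℂ).toRatAlgHom.toLinearMap) LinearMap.id

/-- `Vpq` is a Hodge decomposition of weight `n` adapted to the filtration `F`:
the family `Vpq p` (representing `V^{p, n-p}`) is an internal direct sum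
decomposition of `V_ℂ`, is exchanged by conjugation (`σ(V^{q,p}) = V^{p,q}`,
i.e. `σ (Vpq (n-p)) = Vpq p`), and `F^p = ⊕_{p' ≥ p} V^{p', n-p'}`. -/
def IsHodgeDecompOf (V : Type) [AddCommGroup V] [Module ℚ V]
    (n : ℤ) (F Vpq : ℤ → Submodule ℂ (ℂ ⊗[ℚ] V)) : Prop :=
  DirectSum.IsInternal Vpq ∧
  (∀ p : ℤ, Submodule.map (sigma V) ((Vpq (n - p)).restrictScalars ℚ) =
      (Vpq p).restrictScalars ℚ) ∧
  (∀ p : ℤ, F p = ⨆ p' ≥ p, Vpq p')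

section HodgeAux

variable (V : Type) [AddCommGroup V] [Module ℚ V]

lemma toRatAlgHom_apply (z : ℂ) : (starRingEnd ℂ).toRatAlgHom z = starRingEnd ℂ z := rfl

lemma sigma_sigma (x : ℂ ⊗[ℚ] V) : sigma V (sigma V x) = x := by
  have h : (sigma V) ∘ₗ (sigma V) = LinearMap.id := by
    unfold sigma
    rw [← TensorProduct.map_comp]
    have h1 : ((starRingEnd ℂ).toRatAlgHom.toLinearMap ∘ₗ (starRingEnd ℂ).toRatAlgHom.toLinearMap)
        = LinearMap.id := by
      ext z; simp [toRatAlgHom_apply]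
    rw [h1]
    simp [TensorProduct.map_id]
  exact DFunLike.congr_fun h x

lemma sigma_smul (z : ℂ) (x : ℂ ⊗[ℚ] V) :
    sigma V (z • x) = (starRingEnd ℂ z) • sigma V x := by
  induction x using TensorProduct.induction_on with
  | zero => simp
  | tmul a v =>
      rw [TensorProduct.smul_tmul']
      simp [sigma, TensorProduct.smul_tmul', toRatAlgHom_apply]
  | add x y hx hy => rw [smul_add, map_add, hx, hy, map_add, smul_add]

/-- image of a ℂ-submodule under conjugation, as a ℂ-submodule -/
noncomputable def conjSub (W : Submodule ℂ (ℂ ⊗[ℚ] V)) : Submodule ℂ (ℂ ⊗[ℚ] V) where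
  carrier := sigma V '' W
  add_mem' := by
    rintro _ _ ⟨x, hx, rfl⟩ ⟨y, hy, rfl⟩
    exact ⟨x + y, W.add_mem hx hy, map_add _ _ _⟩
  zero_mem' := ⟨0, W.zero_mem, map_zero _⟩
  smul_mem' := by
    rintro z _ ⟨x, hx, rfl⟩
    refine ⟨(starRingEnd ℂ) z • x, W.smul_mem _ hx, ?_⟩
    rw [sigma_smul]; simp

lemma mem_conjSub {W : Submodule ℂ (ℂ ⊗[ℚ] V)} {x : ℂ ⊗[ℚ] V} :
    x ∈ conjSub V W ↔ sigma V x ∈ W := by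
  constructor
  · rintro ⟨y, hy, rfl⟩; rwa [sigma_sigma]
  · intro h; exact ⟨sigma V x, h, sigma_sigma V x⟩

lemma restrictScalars_conjSub (W : Submodule ℂ (ℂ ⊗[ℚ] V)) :
    (conjSub V W).restrictScalars ℚ = (W.restrictScalars ℚ).map (sigma V) := by
  ext x
  simp only [Submodule.restrictScalars_mem, Submodule.mem_map, mem_conjSub]
  constructor
  · intro h; exact ⟨sigma V x, h, sigma_sigma V x⟩
  · rintro ⟨y, hy, rfl⟩; rwa [sigma_sigma]

lemma conjSub_conjSub (W : Submodule ℂ (ℂ ⊗[ℚ] V)) : conjSub V (conjSub V W) = W := by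
  ext x; simp [mem_conjSub, sigma_sigma]

lemma conjSub_mono {A B : Submodule ℂ (ℂ ⊗[ℚ] V)} (h : A ≤ B) : conjSub V A ≤ conjSub V B := by
  intro x hx; rw [mem_conjSub] at *; exact h hx

lemma conjSub_inf (A B : Submodule ℂ (ℂ ⊗[ℚ] V)) :
    conjSub V (A ⊓ B) = conjSub V A ⊓ conjSub V B := by
  ext x; simp [mem_conjSub]

lemma conjSub_iSup {ι : Sort*} (W : ι → Submodule ℂ (ℂ ⊗[ℚ] V)) :
    conjSub V (⨆ i, W i) = ⨆ i, conjSub V (W i) := by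
  apply le_antisymm
  · intro x hx
    rw [mem_conjSub] at hx
    have key : sigma V (sigma V x) ∈ ⨆ i, conjSub V (W i) := by
      refine Submodule.iSup_induction (motive := fun y => sigma V y ∈ ⨆ i, conjSub V (W i))
        W hx ?_ (by simp) ?_
      · intro i y hy
        exact le_iSup (fun i => conjSub V (W i)) i (by rw [mem_conjSub, sigma_sigma]; exact hy)
      · intro a b ha hb
        rw [map_add]; exact Submodule.add_mem _ ha hb
    rwa [sigma_sigma] at key
  · exact iSup_le fun i => conjSub_mono V (le_iSup W i)

lemma biSup_split (f : ℤ → Submodule ℂ (ℂ ⊗[ℚ] V)) (p : ℤ) :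
    (⨆ p' ≥ p, f p') = f p ⊔ ⨆ p' ≥ p + 1, f p' := by
  apply le_antisymm
  · refine iSup₂_le fun p' hp' => ?_
    rcases eq_or_lt_of_le hp' with h | h
    · exact h ▸ le_sup_left
    · exact le_trans (le_iSup₂ (f := fun p' (_ : p' ≥ p + 1) => f p') p' (by omega)) le_sup_right
  · refine sup_le (le_iSup₂ (f := fun p' (_ : p' ≥ p) => f p') p le_rfl)
      (iSup₂_le fun p' hp' => le_iSup₂ (f := fun p' (_ : p' ≥ p) => f p') p' (by omega))

lemma int_descend {P : ℤ → Prop} (b : ℤ) (hbase : ∀ p, b ≤ p → P p)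
    (hstep : ∀ p, P (p + 1) → P p) : ∀ p, P p := by
  have key : ∀ k : ℕ, ∀ p : ℤ, b - p ≤ k → P p := by
    intro k
    induction k with
    | zero => intro p hp; exact hbase p (by omega)
    | succ k ih =>
      intro p hp
      by_cases hb : b ≤ p
      · exact hbase p hb
      · exact hstep p (ih (p + 1) (by omega))
  intro p
  exact key (b - p).toNat p (by omega)

lemma biSup_disjoint {S : ℤ → Submodule ℂ (ℂ ⊗[ℚ] V)} (h : iSupIndep S)
    (P Q : ℤ → Prop) (hPQ : ∀ i, P i → Q i → False) :
    Disjoint (⨆ i, ⨆ _ : P i, S i) (⨆ i, ⨆ _ : Q i, S i) := by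
  classical
  rw [Submodule.disjoint_def]
  intro x hxP hxQ
  rw [Submodule.mem_biSup_iff_exists_dfinsupp] at hxP hxQ
  obtain ⟨f, hf⟩ := hxP
  obtain ⟨g, hg⟩ := hxQ
  have hinj := h.dfinsupp_lsum_injective
  have hfg : f.filter P = g.filter Q := hinj (by rw [hf, hg])
  have hfil : f.filter P = 0 := by
    refine DFunLike.ext _ _ fun i => ?_
    rw [DFinsupp.filter_apply, DFinsupp.zero_apply]
    by_cases hP : P i
    · rw [if_pos hP]
      have h1 : (f.filter P) i = (g.filter Q) i := by rw [hfg]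
      rw [DFinsupp.filter_apply, DFinsupp.filter_apply, if_pos hP,
        if_neg (fun hQ => hPQ i hP hQ)] at h1
      exact h1
    · rw [if_neg hP]
  rw [hfil, map_zero] at hf
  exact hf.symm

lemma restrict_isCompl {A B : Submodule ℂ (ℂ ⊗[ℚ] V)} (h : IsCompl A B) :
    IsCompl (A.restrictScalars ℚ) (B.restrictScalars ℚ) := by
  constructor
  · rw [disjoint_iff]
    have := h.inf_eq_bot
    ext x
    simp only [Submodule.mem_inf, Submodule.restrictScalars_mem, Submodule.mem_bot]
    rw [← Submodule.mem_inf, this, Submodule.mem_bot]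
  · rw [codisjoint_iff]
    rw [eq_top_iff]
    intro x _
    have hx : x ∈ A ⊔ B := by rw [h.sup_eq_top]; trivial
    obtain ⟨a, ha, b, hb, rfl⟩ := Submodule.mem_sup.mp hx
    exact Submodule.add_mem_sup (by exact ha) (by exact hb)

lemma restrict_inf (A B : Submodule ℂ (ℂ ⊗[ℚ] V)) :
    (A ⊓ B).restrictScalars ℚ = A.restrictScalars ℚ ⊓ B.restrictScalars ℚ := rfl

end HodgeAux

theorem pure_hodge_structure_iff_hodge_decomposition
    (V : Type) [AddCommGroup V] [Module ℚ V] [FiniteDimensional ℚ V]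
    (n : ℤ) (F : ℤ → Submodule ℂ (ℂ ⊗[ℚ] V))
    (hdec : Antitone F)
    (hexh : ∃ a : ℤ, ∀ p ≤ a, F p = ⊤)
    (hsep : ∃ b : ℤ, ∀ p : ℤ, b ≤ p → F p = ⊥) :
    (∀ p : ℤ, IsCompl ((F p).restrictScalars ℚ)
        (Submodule.map (sigma V) ((F (n + 1 - p)).restrictScalars ℚ))) ↔
      ((∃ Vpq : ℤ → Submodule ℂ (ℂ ⊗[ℚ] V), IsHodgeDecompOf V n F Vpq) ∧
        ∀ Vpq : ℤ → Submodule ℂ (ℂ ⊗[ℚ] V), IsHodgeDecompOf V n F Vpq →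
          ∀ p : ℤ, (Vpq p).restrictScalars ℚ =
            (F p).restrictScalars ℚ ⊓
              Submodule.map (sigma V) ((F (n - p)).restrictScalars ℚ)) := by
  obtain ⟨a, ha⟩ := hexh
  obtain ⟨b, hb⟩ := hsep
  constructor
  · intro hcompl
    -- restate the complement hypothesis at the level of ℂ-submodules
    have hdisj : ∀ p : ℤ, F p ⊓ conjSub V (F (n + 1 - p)) = ⊥ := by
      intro p
      apply Submodule.restrictScalars_injective ℚ ℂ (ℂ ⊗[ℚ] V)
      rw [restrict_inf, restrictScalars_conjSub, Submodule.restrictScalars_bot]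
      exact (hcompl p).inf_eq_bot
    have hsup' : ∀ p : ℤ, ∀ x : ℂ ⊗[ℚ] V,
        ∃ u ∈ F p, ∃ w ∈ F (n + 1 - p), x = u + sigma V w := by
      intro p x
      have hx : x ∈ (F p).restrictScalars ℚ ⊔
          (Submodule.map (sigma V) ((F (n + 1 - p)).restrictScalars ℚ)) := by
        rw [(hcompl p).sup_eq_top]; trivial
      obtain ⟨u, hu, v, hv, rfl⟩ := Submodule.mem_sup.mp hx
      obtain ⟨w, hw, rfl⟩ := hv
      exact ⟨u, hu, w, hw, rfl⟩
    set Vpq : ℤ → Submodule ℂ (ℂ ⊗[ℚ] V) :=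
      fun p => F p ⊓ conjSub V (F (n - p)) with hVpq
    have hVpqF : ∀ p, Vpq p ≤ F p := fun p => inf_le_left
    have hVpqC : ∀ p, Vpq p ≤ conjSub V (F (n - p)) := fun p => inf_le_right
    have hconj : ∀ p, conjSub V (Vpq (n - p)) = Vpq p := by
      intro p
      show conjSub V (F (n - p) ⊓ conjSub V (F (n - (n - p)))) = _
      rw [conjSub_inf, conjSub_conjSub, show n - (n - p) = p by ring, inf_comm]
    have hstep : ∀ p, F p = Vpq p ⊔ F (p + 1) := by
      intro p
      apply le_antisymm
      · intro x hx
        obtain ⟨u, hu, w, hw, rfl⟩ := hsup' (p + 1) x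
        have hw' : w ∈ F (n - p) := by
          rwa [show n + 1 - (p + 1) = n - p by ring] at hw
        have hσw : sigma V w ∈ Vpq p := by
          refine Submodule.mem_inf.mpr ⟨?_, ?_⟩
          · have he : sigma V w = (u + sigma V w) - u := by abel
            rw [he]
            exact Submodule.sub_mem _ hx (hdec (by omega) hu)
          · rw [mem_conjSub, sigma_sigma]; exact hw'
        rw [add_comm u (sigma V w)]
        exact Submodule.add_mem_sup hσw hu
      · exact sup_le (hVpqF p) (hdec (by omega))
    have hFsup : ∀ p, F p = ⨆ p' ≥ p, Vpq p' := by
      refine int_descend b ?_ ?_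
      · intro p hp
        rw [hb p hp]
        refine le_antisymm bot_le (iSup₂_le fun p' hp' => le_trans (hVpqF p') ?_)
        rw [hb p' (by omega)]
      · intro p ih
        rw [biSup_split V Vpq p, hstep p, ih]
    have hind : iSupIndep Vpq := by
      intro p
      rw [Submodule.disjoint_def]
      intro x hxp hxne
      have hle : (⨆ p', ⨆ _ : p' ≠ p, Vpq p') ≤ F (p + 1) ⊔ conjSub V (F (n + 1 - p)) := by
        refine iSup₂_le fun p' hp' => ?_
        rcases lt_or_gt_of_ne hp' with h | h
        · exact le_trans (le_trans (hVpqC p') (conjSub_mono V (hdec (by omega)))) le_sup_right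
        · exact le_trans (le_trans (hVpqF p') (hdec (by omega))) le_sup_left
      obtain ⟨y, hy, z, hz, hxyz⟩ := Submodule.mem_sup.mp (hle hxne)
      have hzFp : z ∈ F p := by
        have he : z = x - y := by rw [← hxyz]; abel
        rw [he]
        exact Submodule.sub_mem _ (hVpqF p hxp) (hdec (by omega) hy)
      have hz0 : z = 0 := by
        have hm : z ∈ F p ⊓ conjSub V (F (n + 1 - p)) := Submodule.mem_inf.mpr ⟨hzFp, hz⟩
        rw [hdisj p] at hm
        simpa using hm
      rw [hz0, add_zero] at hxyz
      subst hxyz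
      have hm : y ∈ F (p + 1) ⊓ conjSub V (F (n + 1 - (p + 1))) := by
        refine Submodule.mem_inf.mpr ⟨hy, ?_⟩
        rw [show n + 1 - (p + 1) = n - p by ring]
        exact hVpqC p hxp
      rw [hdisj (p + 1)] at hm
      simpa using hm
    have htop : (⨆ p', Vpq p') = ⊤ := by
      have h1 : (⊤ : Submodule ℂ (ℂ ⊗[ℚ] V)) = ⨆ p' ≥ a, Vpq p' := by
        rw [← hFsup a, ha a le_rfl]
      rw [eq_top_iff, h1]
      exact iSup₂_le fun p' _ => le_iSup Vpq p'
    have hinternal : DirectSum.IsInternal Vpq :=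
      DirectSum.isInternal_submodule_of_iSupIndep_of_iSup_eq_top hind htop
    constructor
    · exact ⟨Vpq, hinternal,
        fun p => by rw [← restrictScalars_conjSub, hconj p], hFsup⟩
    · rintro Vpq' ⟨hint', hconj', hF'⟩ p
      have hconjC' : ∀ q, conjSub V (Vpq' (n - q)) = Vpq' q := by
        intro q
        apply Submodule.restrictScalars_injective ℚ ℂ (ℂ ⊗[ℚ] V)
        rw [restrictScalars_conjSub]
        exact hconj' q
      have hle1 : ∀ q, Vpq' q ≤ F q := by
        intro q
        rw [hF' q]
        exact le_iSup₂ (f := fun p' (_ : p' ≥ q) => Vpq' p') q le_rfl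
      have hle2 : Vpq' p ≤ conjSub V (F (n - p)) := by
        rw [← hconjC' p]
        exact conjSub_mono V (hle1 (n - p))
      rw [← restrictScalars_conjSub, ← restrict_inf]
      refine congrArg _ ?_
      apply le_antisymm
      · exact le_inf (hle1 p) hle2
      · intro x hx
        obtain ⟨hx1, hx2⟩ := Submodule.mem_inf.mp hx
        have hsplit : F p = Vpq' p ⊔ F (p + 1) := by
          rw [hF' p, biSup_split, ← hF' (p + 1)]
        obtain ⟨v, hv, y, hy, hxvy⟩ := Submodule.mem_sup.mp (hsplit ▸ hx1)
        have hy2 : y ∈ conjSub V (F (n + 1 - (p + 1))) := by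
          rw [show n + 1 - (p + 1) = n - p by ring]
          have he : y = x - v := by rw [← hxvy]; abel
          rw [he]
          exact Submodule.sub_mem _ hx2 (hle2 hv)
        have hy0 : y = 0 := by
          have hm : y ∈ F (p + 1) ⊓ conjSub V (F (n + 1 - (p + 1))) :=
            Submodule.mem_inf.mpr ⟨hy, hy2⟩
          rw [hdisj (p + 1)] at hm
          simpa using hm
        rw [hy0, add_zero] at hxvy
        rw [← hxvy]
        exact hv
  · rintro ⟨⟨Vpq, hint, hconjR, hF⟩, -⟩
    intro p
    have hconjC : ∀ q, conjSub V (Vpq (n - q)) = Vpq q := by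
      intro q
      apply Submodule.restrictScalars_injective ℚ ℂ (ℂ ⊗[ℚ] V)
      rw [restrictScalars_conjSub]
      exact hconjR q
    have hconjC' : ∀ q, conjSub V (Vpq q) = Vpq (n - q) := by
      intro q
      have h := hconjC (n - q)
      rwa [show n - (n - q) = q by ring] at h
    rw [DirectSum.isInternal_submodule_iff_iSupIndep_and_iSup_eq_top] at hint
    obtain ⟨hind, htop⟩ := hint
    have hkey : conjSub V (F (n + 1 - p)) = ⨆ p', ⨆ _ : p' ≤ p - 1, Vpq p' := by
      rw [hF (n + 1 - p)]
      simp only [conjSub_iSup, hconjC']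
      apply le_antisymm
      · exact iSup₂_le fun p' hp' =>
          le_iSup₂ (f := fun q (_ : q ≤ p - 1) => Vpq q) (n - p') (by omega)
      · refine iSup₂_le fun p'' hp'' => ?_
        have h := le_iSup₂ (f := fun p' (_ : p' ≥ n + 1 - p) => Vpq (n - p')) (n - p'')
          (by omega)
        rwa [show n - (n - p'') = p'' by ring] at h
    rw [← restrictScalars_conjSub]
    apply restrict_isCompl
    constructor
    · rw [hkey, hF p]
      exact biSup_disjoint V hind _ _ (fun i h1 h2 => by omega)
    · rw [codisjoint_iff, hkey, hF p, eq_top_iff, ← htop]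
      refine iSup_le fun p' => ?_
      rcases le_or_gt p p' with h | h
      · exact le_trans (le_iSup₂ (f := fun q (_ : q ≥ p) => Vpq q) p' h) le_sup_left
      · exact le_trans (le_iSup₂ (f := fun q (_ : q ≤ p - 1) => Vpq q) p' (by omega)) le_sup_right
end

section
/- Let n ≥ 1 be an integer and M ≥ 1 a real number. Then there exists a constant c > 0, depending only on n and M, with the following property: for every connected subset A ⊆ ℝⁿ such that the set {γ ∈ ℤⁿ : (γ + (−M, M)ⁿ) ∩ A ≠ ∅} is infinite, there exists T₀ > 0 (depending on A) such that for every T ≥ T₀ the number of lattice points γ ∈ ℤⁿ with ‖γ‖ ≤ T and (γ + (−M, M)ⁿ) ∩ A ≠ ∅ is at least c·T. -/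
/-!
STATEMENT 6: For `n ≥ 1` and `M ≥ 1` there is a constant `c > 0` (depending
only on `n` and `M`) such that: for every connected `A ⊆ ℝⁿ` meeting
infinitely many translates `γ + (−M, M)ⁿ` (`γ ∈ ℤⁿ`) of the open cube, there
is `T₀ > 0` such that for all `T ≥ T₀`, at least `c·T` lattice points
`γ ∈ ℤⁿ` with `‖γ‖ ≤ T` satisfy `(γ + (−M, M)ⁿ) ∩ A ≠ ∅`. -/

/-- A lattice point `γ ∈ ℤⁿ`, viewed in Euclidean `n`-space. -/
noncomputable def latticePt (n : ℕ) (γ : Fin n → ℤ) : EuclideanSpace ℝ (Fin n) :=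
  WithLp.toLp 2 (fun i => (γ i : ℝ))

/-- `(γ + (−M, M)ⁿ) ∩ A ≠ ∅`: the translate by `γ` of the open cube of side
`2M` centered at the origin meets `A`. -/
def cubeMeets (n : ℕ) (M : ℝ) (γ : Fin n → ℤ) (A : Set (EuclideanSpace ℝ (Fin n))) : Prop :=
  ∃ x ∈ A, ∀ i : Fin n, |x i - (γ i : ℝ)| < M

lemma aux_norm_diff_le (n : ℕ) (M : ℝ) (hM : 0 ≤ M) (x : EuclideanSpace ℝ (Fin n))
    (γ : Fin n → ℤ) (h : ∀ i, |x i - (γ i : ℝ)| ≤ M) :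
    ‖x - latticePt n γ‖ ≤ M * Real.sqrt n := by
  rw [EuclideanSpace.norm_eq]
  have h1 : ∑ i, ‖(x - latticePt n γ) i‖ ^ 2 ≤ ∑ _i : Fin n, M ^ 2 := by
    apply Finset.sum_le_sum
    intro i _
    have : ‖(x - latticePt n γ) i‖ = |x i - (γ i : ℝ)| := by
      simp [latticePt, Real.norm_eq_abs]
    rw [this]
    exact pow_le_pow_left₀ (abs_nonneg _) (h i) 2
  calc Real.sqrt (∑ i, ‖(x - latticePt n γ) i‖ ^ 2)
      ≤ Real.sqrt (∑ _i : Fin n, M ^ 2) := Real.sqrt_le_sqrt h1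
    _ = Real.sqrt ((n : ℝ) * M ^ 2) := by rw [Finset.sum_const]; simp [mul_comm]
    _ = M * Real.sqrt n := by
        rw [Real.sqrt_mul (Nat.cast_nonneg n), Real.sqrt_sq hM, mul_comm]

lemma aux_coord_le_norm (n : ℕ) (γ : Fin n → ℤ) (i : Fin n) :
    |(γ i : ℝ)| ≤ ‖latticePt n γ‖ := by
  rw [EuclideanSpace.norm_eq]
  have : |(γ i : ℝ)| = Real.sqrt (‖latticePt n γ i‖ ^ 2) := by
    rw [Real.sqrt_sq_eq_abs]
    simp [latticePt, Real.norm_eq_abs]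
  rw [this]
  apply Real.sqrt_le_sqrt
  exact Finset.single_le_sum (f := fun j => ‖latticePt n γ j‖ ^ 2)
    (fun j _ => sq_nonneg _) (Finset.mem_univ i)

lemma aux_finite_ball (n : ℕ) (T : ℝ) :
    {γ : Fin n → ℤ | ‖latticePt n γ‖ ≤ T}.Finite := by
  have hsub : {γ : Fin n → ℤ | ‖latticePt n γ‖ ≤ T} ⊆
      Set.pi Set.univ (fun _ : Fin n => Set.Icc (-⌈T⌉) ⌈T⌉) := by
    intro γ hγ i _
    have h1 : |(γ i : ℝ)| ≤ T := le_trans (aux_coord_le_norm n γ i) hγ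
    have h2 : |γ i| ≤ ⌈T⌉ := by
      have : ((|γ i| : ℤ) : ℝ) ≤ (⌈T⌉ : ℝ) := by
        push_cast
        exact le_trans h1 (Int.le_ceil T)
      exact_mod_cast this
    exact abs_le.mp h2
  exact Set.Finite.subset (Set.Finite.pi (fun i => Set.finite_Icc _ _)) hsub

theorem connected_set_meets_linearly_many_cubes
    (n : ℕ) (hn : 1 ≤ n) (M : ℝ) (hM : 1 ≤ M) :
    ∃ c : ℝ, 0 < c ∧
      ∀ A : Set (EuclideanSpace ℝ (Fin n)), IsConnected A →
        {γ : Fin n → ℤ | cubeMeets n M γ A}.Infinite →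
        ∃ T₀ : ℝ, 0 < T₀ ∧ ∀ T : ℝ, T₀ ≤ T →
          c * T ≤
            ({γ : Fin n → ℤ | ‖latticePt n γ‖ ≤ T ∧ cubeMeets n M γ A}).ncard := by
  set s : ℝ := M * Real.sqrt n with hs_def
  have hsqrt1 : 1 ≤ Real.sqrt n := by
    rw [show (1:ℝ) = Real.sqrt 1 by simp]
    exact Real.sqrt_le_sqrt (by exact_mod_cast hn)
  have hs1 : 1 ≤ s := by
    calc (1:ℝ) = 1 * 1 := by ring
    _ ≤ M * Real.sqrt n := by
        apply mul_le_mul hM hsqrt1 zero_le_one (le_trans zero_le_one hM)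
  have hspos : 0 < s := lt_of_lt_of_le zero_lt_one hs1
  set D : ℝ := 2 * s + 1 with hD_def
  have hDpos : 0 < D := by positivity
  refine ⟨1 / (2 * D), by positivity, ?_⟩
  intro A hA hinf
  obtain ⟨a₀, ha₀⟩ := hA.nonempty
  set r₀ : ℝ := ‖a₀‖ with hr₀
  have hr₀0 : 0 ≤ r₀ := norm_nonneg _
  -- A is unbounded in norm
  have hUnb : ∀ R : ℝ, ∃ x ∈ A, R ≤ ‖x‖ := by
    intro R
    have hns : ¬ ({γ : Fin n → ℤ | cubeMeets n M γ A} ⊆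
        {γ : Fin n → ℤ | ‖latticePt n γ‖ ≤ R + s}) := by
      intro h
      exact hinf (Set.Finite.subset (aux_finite_ball n (R + s)) h)
    obtain ⟨γ, hγc, hγn⟩ := Set.not_subset.mp hns
    obtain ⟨x, hxA, hx⟩ := hγc
    refine ⟨x, hxA, ?_⟩
    have hdiff : ‖x - latticePt n γ‖ ≤ s :=
      aux_norm_diff_le n M (le_trans zero_le_one hM) x γ (fun i => le_of_lt (hx i))
    have hγbig : R + s < ‖latticePt n γ‖ := lt_of_not_ge hγn
    have : ‖latticePt n γ‖ ≤ ‖x‖ + s := by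
      calc ‖latticePt n γ‖ ≤ ‖x‖ + ‖x - latticePt n γ‖ := by
            rw [norm_sub_rev]
            exact (norm_le_insert' _ _)
      _ ≤ ‖x‖ + s := by linarith
    linarith
  -- intermediate value: every r ≥ r₀ is attained as a norm of a point of A
  have hIVT : ∀ r : ℝ, r₀ ≤ r → ∃ y ∈ A, ‖y‖ = r := by
    intro r hr
    obtain ⟨x, hxA, hx⟩ := hUnb r
    have := hA.isPreconnected.intermediate_value (a := a₀) (b := x) ha₀ hxA
      (continuous_norm.continuousOn)
    have hmem : r ∈ Set.Icc ‖a₀‖ ‖x‖ := ⟨hr, hx⟩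
    obtain ⟨y, hyA, hy⟩ := this hmem
    exact ⟨y, hyA, hy⟩
  -- choose points of norm r₀ + D k and round them to lattice points
  have hex : ∀ k : ℕ, ∃ y ∈ A, ‖y‖ = r₀ + D * k := by
    intro k
    apply hIVT
    nlinarith [Nat.cast_nonneg (α := ℝ) k]
  choose y hyA hynorm using hex
  set g : ℕ → (Fin n → ℤ) := fun k i => round (y k i) with hg
  have hgcoord : ∀ k i, |y k i - ((g k i : ℤ) : ℝ)| ≤ M := by
    intro k i
    have : |y k i - ((round (y k i) : ℤ) : ℝ)| ≤ 1 / 2 := by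
      have := abs_sub_round (y k i)
      simpa using this
    calc |y k i - ((g k i : ℤ) : ℝ)| ≤ 1/2 := this
    _ ≤ M := by linarith
  have hgmeets : ∀ k, cubeMeets n M (g k) A := by
    intro k
    refine ⟨y k, hyA k, fun i => ?_⟩
    calc |y k i - ((g k i : ℤ) : ℝ)| ≤ 1/2 := by
          have := abs_sub_round (y k i); simpa using this
    _ < M := by linarith
  have hgnorm : ∀ k : ℕ, |‖latticePt n (g k)‖ - (r₀ + D * k)| ≤ s := by
    intro k
    have hdiff : ‖y k - latticePt n (g k)‖ ≤ s :=
      aux_norm_diff_le n M (le_trans zero_le_one hM) (y k) (g k) (hgcoord k)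
    have := abs_norm_sub_norm_le (latticePt n (g k)) (y k)
    rw [norm_sub_rev] at this
    rw [hynorm k] at this
    linarith [le_trans this hdiff]
  -- choose T₀
  refine ⟨max (2 * (r₀ + s)) 1, lt_max_of_lt_right zero_lt_one, ?_⟩
  intro T hT
  have hT1 : 1 ≤ T := le_trans (le_max_right _ _) hT
  have hT2 : 2 * (r₀ + s) ≤ T := le_trans (le_max_left _ _) hT
  set u : ℝ := (T - r₀ - s) / D with hu
  have hu0 : 0 ≤ u := by
    apply div_nonneg _ (le_of_lt hDpos)
    nlinarith
  set K : ℕ := ⌊u⌋₊ + 1 with hK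
  -- the target set is finite
  have hfin : ({γ : Fin n → ℤ | ‖latticePt n γ‖ ≤ T ∧ cubeMeets n M γ A}).Finite :=
    Set.Finite.subset (aux_finite_ball n T) (fun γ h => h.1)
  -- g maps range K into the target, injectively
  have hmaps : ∀ k ∈ Finset.range K, g k ∈ hfin.toFinset := by
    intro k hk
    rw [Set.Finite.mem_toFinset]
    refine ⟨?_, hgmeets k⟩
    have hku : (k : ℝ) ≤ u := by
      have : k ≤ ⌊u⌋₊ := Nat.lt_succ_iff.mp (Finset.mem_range.mp hk)
      calc (k : ℝ) ≤ (⌊u⌋₊ : ℝ) := by exact_mod_cast this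
      _ ≤ u := Nat.floor_le hu0
    have : r₀ + D * k + s ≤ T := by
      have := (le_div_iff₀ hDpos).mp hku
      nlinarith
    have := hgnorm k
    rw [abs_le] at this
    linarith [this.1, this.2]
  have hinj : Set.InjOn g (Finset.range K) := by
    intro k hk k' hk' hkk'
    have h1 := hgnorm k
    have h2 := hgnorm k'
    rw [hkk'] at h1
    have : |D * (k : ℝ) - D * (k' : ℝ)| ≤ 2 * s := by
      rw [abs_le] at h1 h2 ⊢
      constructor <;> linarith [h1.1, h1.2, h2.1, h2.2]
    rw [← mul_sub, abs_mul, abs_of_pos hDpos] at this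
    have hlt : |(k : ℝ) - (k' : ℝ)| < 1 := by
      by_contra hcon
      push_neg at hcon
      nlinarith
    by_contra hne
    have h1 : 1 ≤ |(k:ℝ) - (k':ℝ)| := by
      rcases Nat.lt_or_ge k k' with h | h
      · have : (k:ℝ) + 1 ≤ (k':ℝ) := by exact_mod_cast Nat.succ_le_of_lt h
        rw [abs_sub_comm, abs_of_nonneg (by linarith)]; linarith
      · have hlt' : k' < k := lt_of_le_of_ne h (Ne.symm hne)
        have : (k':ℝ) + 1 ≤ (k:ℝ) := by exact_mod_cast Nat.succ_le_of_lt hlt'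
        rw [abs_of_nonneg (by linarith)]; linarith
    linarith
  have hcard : K ≤ hfin.toFinset.card :=
    le_trans (by simp) (Finset.card_le_card_of_injOn g hmaps hinj)
  have hncard : ({γ : Fin n → ℤ | ‖latticePt n γ‖ ≤ T ∧ cubeMeets n M γ A}).ncard
      = hfin.toFinset.card := by
    exact Set.ncard_eq_toFinset_card _ hfin
  rw [hncard]
  have hKu : u ≤ (K : ℝ) := by
    have := Nat.lt_floor_add_one u
    push_cast [hK]
    linarith
  have hfinal : 1 / (2 * D) * T ≤ u := by
    rw [hu, div_mul_eq_mul_div, one_mul, div_le_div_iff₀ (by positivity) hDpos]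
    nlinarith
  calc 1 / (2 * D) * T ≤ u := hfinal
  _ ≤ (K : ℝ) := hKu
  _ ≤ (hfin.toFinset.card : ℝ) := by exact_mod_cast hcard
end
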